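/- Let Ω = (a, b) be a bounded open interval in ℝ of length L = b − a, and let g : ℝ → ℝ be continuously differentiable on [a, b] with ‖g'‖_{L²(Ω)} > 0. If ‖g‖_{L²(Ω)} / ‖g'‖_{L²(Ω)} < L, then sup_{t ∈ Ω} |g(t)| ≤ 2·√(‖g‖_{L²(Ω)} · ‖g'‖_{L²(Ω)}). -/

import Mathlib

open MeasureTheory


/-- For `g` continuously differentiable on `[a, b]` with `‖g'‖_{L²} > 0` and
`‖g‖_{L²}/‖g'‖_{L²} < b − a`, one has `sup_{t ∈ (a,b)} |g(t)| ≤ 2·√(‖g‖_{L²}·‖g'‖_{L²})`. -/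
theorem stmt5 (a b : ℝ) (hab : a < b) (g g' : ℝ → ℝ)
    (hg' : ∀ t ∈ Set.Icc a b, HasDerivAt g (g' t) t)
    (hc : ContinuousOn g' (Set.Icc a b))
    (hpos : 0 < Real.sqrt (∫ t in a..b, g' t ^ 2))
    (hratio : Real.sqrt (∫ t in a..b, g t ^ 2) / Real.sqrt (∫ t in a..b, g' t ^ 2) < b - a) :
    ∀ t ∈ Set.Ioo a b,
      |g t| ≤ 2 * Real.sqrt
        (Real.sqrt (∫ s in a..b, g s ^ 2) * Real.sqrt (∫ s in a..b, g' s ^ 2)) := by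
  intro t ht
  have htI : t ∈ Set.Icc a b := Set.Ioo_subset_Icc_self ht
  set N := Real.sqrt (∫ s in a..b, g s ^ 2) with hNdef
  set D := Real.sqrt (∫ s in a..b, g' s ^ 2) with hDdef
  have hgc : ContinuousOn g (Set.Icc a b) := fun x hx =>
    (hg' x hx).continuousAt.continuousWithinAt
  have hg2c : ContinuousOn (fun x => g x ^ 2) (Set.Icc a b) := hgc.pow 2
  have huIcc : Set.uIcc a b = Set.Icc a b := Set.uIcc_of_le hab.le
  have hIg : IntervalIntegrable (fun s => g s ^ 2) volume a b :=
    (hg2c.mono huIcc.subset).intervalIntegrable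
  have hIg' : IntervalIntegrable (fun s => g' s ^ 2) volume a b :=
    ((hc.pow 2).mono huIcc.subset).intervalIntegrable
  have hNnn : 0 ≤ N := Real.sqrt_nonneg _
  have hDpos : 0 < D := hpos
  have hN2 : N ^ 2 = ∫ s in a..b, g s ^ 2 :=
    Real.sq_sqrt (intervalIntegral.integral_nonneg hab.le fun u _ => sq_nonneg _)
  have hD2 : D ^ 2 = ∫ s in a..b, g' s ^ 2 :=
    Real.sq_sqrt (intervalIntegral.integral_nonneg hab.le fun u _ => sq_nonneg _)
  have hND : N ≤ D * (b - a) := by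
    have := (div_lt_iff₀ hDpos).mp hratio
    nlinarith
  by_cases hgt : g t = 0
  · rw [hgt, abs_zero]; positivity
  · -- N > 0
    have hNpos : 0 < N := by
      apply Real.sqrt_pos.mpr
      exact intervalIntegral.integral_pos hab hg2c (fun x _ => sq_nonneg _)
        ⟨t, htI, by positivity⟩
    -- minimum point s of g² on [a,b]
    obtain ⟨s, hsI, hsmin⟩ :=
      isCompact_Icc.exists_isMinOn (Set.nonempty_Icc.mpr hab.le) hg2c
    -- g s ^ 2 ≤ N * D
    have hs_small : g s ^ 2 ≤ N * D := by
      have h1 : (∫ _ in a..b, g s ^ 2) ≤ ∫ x in a..b, g x ^ 2 :=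
        intervalIntegral.integral_mono_on hab.le intervalIntegrable_const hIg
          fun x hx => hsmin hx
      rw [intervalIntegral.integral_const, smul_eq_mul] at h1
      nlinarith
    -- FTC for g² from s to t
    have hsub : Set.uIcc s t ⊆ Set.Icc a b := Set.uIcc_subset_Icc hsI htI
    have hintst : IntervalIntegrable (fun x => 2 * g x * g' x) volume s t :=
      (((continuousOn_const.mul hgc).mul hc).mono hsub).intervalIntegrable
    have hftc : (∫ x in s..t, 2 * g x * g' x) = g t ^ 2 - g s ^ 2 := by
      apply intervalIntegral.integral_eq_sub_of_hasDerivAt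
      · intro x hx
        have : HasDerivAt (fun t => g t ^ 2) _ x := (hg' x (hsub hx)).pow 2
        simpa [mul_comm, mul_assoc, mul_left_comm] using this
      · exact hintst
    -- pointwise AM-GM bound
    have hptwise : ∀ x ∈ Set.Icc a b,
        |2 * g x * g' x| ≤ (D / N) * g x ^ 2 + (N / D) * g' x ^ 2 := by
      intro x _
      have h1 : |2 * g x * g' x| = 2 * |g x| * |g' x| := by
        rw [abs_mul, abs_mul]; norm_num
      have h2 := sq_nonneg (D * |g x| - N * |g' x|)
      have h3 : |g x| ^ 2 = g x ^ 2 := sq_abs _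
      have h4 : |g' x| ^ 2 = g' x ^ 2 := sq_abs _
      rw [h1]
      rw [div_mul_eq_mul_div, div_mul_eq_mul_div, div_add_div _ _ (ne_of_gt hNpos)
        (ne_of_gt hDpos), le_div_iff₀ (by positivity)]
      nlinarith [abs_nonneg (g x), abs_nonneg (g' x)]
    -- integral bound of |2 g g'| over [a,b]
    have hIabs : IntervalIntegrable (fun x => |2 * g x * g' x|) volume a b :=
      ((((continuousOn_const.mul hgc).mul hc).abs).mono huIcc.subset).intervalIntegrable
    have hIrhs : IntervalIntegrable
        (fun x => (D / N) * g x ^ 2 + (N / D) * g' x ^ 2) volume a b :=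
      (hIg.const_mul _).add (hIg'.const_mul _)
    have hCS : (∫ x in a..b, |2 * g x * g' x|) ≤ 2 * (N * D) := by
      have h1 : (∫ x in a..b, |2 * g x * g' x|) ≤
          ∫ x in a..b, ((D / N) * g x ^ 2 + (N / D) * g' x ^ 2) :=
        intervalIntegral.integral_mono_on hab.le hIabs hIrhs hptwise
      have h2 : (∫ x in a..b, ((D / N) * g x ^ 2 + (N / D) * g' x ^ 2)) =
          (D / N) * (∫ x in a..b, g x ^ 2) + (N / D) * (∫ x in a..b, g' x ^ 2) := by
        rw [intervalIntegral.integral_add (hIg.const_mul _) (hIg'.const_mul _),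
          intervalIntegral.integral_const_mul, intervalIntegral.integral_const_mul]
      rw [h2, ← hN2, ← hD2] at h1
      have h3 : (D / N) * N ^ 2 + (N / D) * D ^ 2 = 2 * (N * D) := by
        field_simp; ring
      linarith
    -- bound |∫ s..t| by ∫ a..b of abs
    have habs : |∫ x in s..t, 2 * g x * g' x| ≤ ∫ x in a..b, |2 * g x * g' x| := by
      have hnonneg : (0 : ℝ → ℝ) ≤ᵐ[MeasureTheory.volume.restrict (Set.Ioc a b)]
          fun x => |2 * g x * g' x| :=
        Filter.Eventually.of_forall fun x => abs_nonneg _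
      rcases le_total s t with hst | hst
      · calc |∫ x in s..t, 2 * g x * g' x|
            ≤ ∫ x in s..t, |2 * g x * g' x| :=
              intervalIntegral.abs_integral_le_integral_abs hst
          _ ≤ ∫ x in a..b, |2 * g x * g' x| :=
              intervalIntegral.integral_mono_interval hsI.1 hst htI.2 hnonneg hIabs
      · rw [intervalIntegral.integral_symm, abs_neg]
        calc |∫ x in t..s, 2 * g x * g' x|
            ≤ ∫ x in t..s, |2 * g x * g' x| :=
              intervalIntegral.abs_integral_le_integral_abs hst
          _ ≤ ∫ x in a..b, |2 * g x * g' x| :=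
              intervalIntegral.integral_mono_interval htI.1 hst hsI.2 hnonneg hIabs
    -- combine
    have hkey : g t ^ 2 ≤ 4 * (N * D) := by
      have h1 : g t ^ 2 = g s ^ 2 + ∫ x in s..t, 2 * g x * g' x := by
        rw [hftc]; ring
      have h2 : (∫ x in s..t, 2 * g x * g' x) ≤ 2 * (N * D) :=
        le_trans (le_abs_self _) (le_trans habs hCS)
      linarith [mul_nonneg hNnn hDpos.le]
    calc |g t| = Real.sqrt (g t ^ 2) := (Real.sqrt_sq_eq_abs _).symm
      _ ≤ Real.sqrt (4 * (N * D)) := Real.sqrt_le_sqrt hkey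
      _ = Real.sqrt 4 * Real.sqrt (N * D) := Real.sqrt_mul (by norm_num) _
      _ = 2 * Real.sqrt (N * D) := by
          rw [show (4 : ℝ) = 2 ^ 2 by norm_num, Real.sqrt_sq (by norm_num : (0:ℝ) ≤ 2)]
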